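/- For n ≥ 3 and m > 0, the principal curvatures of the graph of the Schwarzschild graphing function h (satisfying (h')² = 2m/(r^{n−2} − 2m)) at radius r are −((n−2)/2)·√(2m)·r^{−n/2} (multiplicity 1) and √(2m)·r^{−n/2} (multiplicity n−1). -/

import Mathlib

open Set

theorem schwarzschild_principal_curvatures (n : ℕ) (hn : 3 ≤ n) (m : ℝ) (hm : 0 < m)
    (h : ℝ → ℝ)
    (hh : ContDiffOn ℝ 2 h (Ioi ((2 * m) ^ ((1 : ℝ) / ((n : ℝ) - 2)))))
    (hpos : ∀ r ∈ Ioi ((2 * m) ^ ((1 : ℝ) / ((n : ℝ) - 2))), 0 < deriv h r)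
    (hsq : ∀ r ∈ Ioi ((2 * m) ^ ((1 : ℝ) / ((n : ℝ) - 2))),
      (deriv h r) ^ 2 = 2 * m / (r ^ ((n : ℝ) - 2) - 2 * m)) :
    ∀ r ∈ Ioi ((2 * m) ^ ((1 : ℝ) / ((n : ℝ) - 2))),
      deriv (deriv h) r / (1 + (deriv h r) ^ 2) ^ ((3 : ℝ) / 2)
          = -(((n : ℝ) - 2) / 2) * Real.sqrt (2 * m) * r ^ (-(n : ℝ) / 2)
      ∧ deriv h r / (r * Real.sqrt (1 + (deriv h r) ^ 2))
          = Real.sqrt (2 * m) * r ^ (-(n : ℝ) / 2) := by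
  have hn3 : (3 : ℝ) ≤ (n : ℝ) := by exact_mod_cast hn
  set p : ℝ := (n : ℝ) - 2 with hpdef
  have hp1 : 1 ≤ p := by simp only [hpdef]; linarith
  have hp0 : 0 < p := lt_of_lt_of_le one_pos hp1
  have hm2 : 0 < 2 * m := by linarith
  set c : ℝ := (2 * m) ^ ((1 : ℝ) / p) with hcdef
  have hc : 0 < c := Real.rpow_pos_of_pos hm2 _
  have hcp : c ^ p = 2 * m := by
    rw [hcdef, ← Real.rpow_mul hm2.le, one_div, inv_mul_cancel₀ hp0.ne', Real.rpow_one]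
  have key : ∀ r ∈ Ioi c, 0 < r ∧ 0 < r ^ p - 2 * m := by
    intro r hr
    have hr0 : 0 < r := hc.trans hr
    refine ⟨hr0, ?_⟩
    have := Real.rpow_lt_rpow hc.le hr hp0
    rw [hcp] at this
    linarith
  set s : ℝ := Real.sqrt (2 * m) with hsdef
  have hs : 0 < s := Real.sqrt_pos.mpr hm2
  have hs2 : s ^ 2 = 2 * m := Real.sq_sqrt hm2.le
  set g : ℝ → ℝ := fun r => s * (r ^ p - 2 * m) ^ (-(1 : ℝ) / 2) with hgdef
  have hgsq : ∀ r ∈ Ioi c, (g r) ^ 2 = 2 * m / (r ^ p - 2 * m) := by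
    intro r hr
    obtain ⟨hr0, hu⟩ := key r hr
    have : ((r ^ p - 2 * m) ^ (-(1 : ℝ) / 2)) ^ (2 : ℕ) = (r ^ p - 2 * m)⁻¹ := by
      rw [← Real.rpow_natCast ((r ^ p - 2 * m) ^ (-(1 : ℝ) / 2)) 2,
        ← Real.rpow_mul hu.le]
      norm_num
      exact (Real.rpow_neg_one _)
    rw [hgdef]
    simp only [mul_pow, hs2, this]
    rw [div_eq_mul_inv]
  have hdh : ∀ r ∈ Ioi c, deriv h r = g r := by
    intro r hr
    obtain ⟨hr0, hu⟩ := key r hr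
    have h1 : (deriv h r) ^ 2 = (g r) ^ 2 := by rw [hsq r hr, hgsq r hr]
    have hg0 : 0 < g r := mul_pos hs (Real.rpow_pos_of_pos hu _)
    have := hpos r hr
    nlinarith [h1, this, hg0]
  intro r hr
  obtain ⟨hr0, hu⟩ := key r hr
  set u : ℝ := r ^ p - 2 * m with hudef
  have hone : 1 + (deriv h r) ^ 2 = r ^ p / u := by
    rw [hsq r hr]
    field_simp
    have hu' : r ^ p - 2 * m ≠ 0 := hu.ne'
    rw [hudef, add_mul, one_mul, div_mul_cancel₀ _ hu']
    ring
  have hDg : HasDerivAt g ((p * r ^ (p - 1)) * (-(1 : ℝ) / 2) * u ^ (-(1 : ℝ) / 2 - 1) * s) r := by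
    have h1 : HasDerivAt (fun x : ℝ => x ^ p - 2 * m) (p * r ^ (p - 1)) r :=
      (Real.hasDerivAt_rpow_const (Or.inl hr0.ne')).sub_const _
    have h2 := h1.rpow_const (p := -(1 : ℝ) / 2) (Or.inl hu.ne')
    have h3 := h2.const_mul s
    exact h3.congr_deriv (by rw [hudef]; ring)
  have hD : deriv (deriv h) r
      = (p * r ^ (p - 1)) * (-(1 : ℝ) / 2) * u ^ (-(1 : ℝ) / 2 - 1) * s := by
    have heq : deriv h =ᶠ[nhds r] g :=
      Filter.eventuallyEq_of_mem (isOpen_Ioi.mem_nhds hr) hdh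
    rw [heq.deriv_eq, hDg.deriv]
  have hrpow : 0 < r ^ p := Real.rpow_pos_of_pos hr0 p
  have e3 : u ^ (-(1 : ℝ) / 2 - 1) = (u ^ ((3 : ℝ) / 2))⁻¹ := by
    rw [show (-(1 : ℝ) / 2 - 1) = -((3 : ℝ) / 2) by norm_num, Real.rpow_neg hu.le]
  have e5 : u ^ (-(1 : ℝ) / 2) = (u ^ ((1 : ℝ) / 2))⁻¹ := by
    rw [show (-(1 : ℝ) / 2) = -((1 : ℝ) / 2) by norm_num, Real.rpow_neg hu.le]
  have hv3 : (0 : ℝ) < u ^ ((3 : ℝ) / 2) := Real.rpow_pos_of_pos hu _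
  have hv1 : (0 : ℝ) < u ^ ((1 : ℝ) / 2) := Real.rpow_pos_of_pos hu _
  have hb3 : (0 : ℝ) < r ^ (p * ((3 : ℝ) / 2)) := Real.rpow_pos_of_pos hr0 _
  have hb1 : (0 : ℝ) < r ^ (p * ((1 : ℝ) / 2)) := Real.rpow_pos_of_pos hr0 _
  constructor
  · rw [hD, hone]
    have e2 : (r ^ p / u) ^ ((3 : ℝ) / 2) = r ^ (p * ((3 : ℝ) / 2)) / u ^ ((3 : ℝ) / 2) := by
      rw [Real.div_rpow hrpow.le hu.le, ← Real.rpow_mul hr0.le]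
    have e4 : r ^ (p - 1) = r ^ (-(n : ℝ) / 2) * r ^ (p * ((3 : ℝ) / 2)) := by
      rw [← Real.rpow_add hr0]
      congr 1
      rw [hpdef]; ring
    rw [e2, e3, e4]
    field_simp
  · rw [hone, hdh r hr, hgdef]
    have e2 : Real.sqrt (r ^ p / u) = r ^ (p * ((1 : ℝ) / 2)) / u ^ ((1 : ℝ) / 2) := by
      rw [Real.sqrt_eq_rpow, Real.div_rpow hrpow.le hu.le, ← Real.rpow_mul hr0.le]
    have e4 : r * r ^ (p * ((1 : ℝ) / 2)) = r ^ ((n : ℝ) / 2) := by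
      nth_rewrite 1 [← Real.rpow_one r]
      rw [← Real.rpow_add hr0]
      congr 1
      rw [hpdef]; ring
    have e6 : r ^ (-(n : ℝ) / 2) = (r ^ ((n : ℝ) / 2))⁻¹ := by
      rw [show (-(n : ℝ) / 2) = -((n : ℝ) / 2) by ring, Real.rpow_neg hr0.le]
    have hn2 : (0 : ℝ) < r ^ ((n : ℝ) / 2) := Real.rpow_pos_of_pos hr0 _
    rw [e2]
    beta_reduce
    rw [show r ^ p - 2 * m = u from rfl, e5, e6, ← e4]
    field_simp
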